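/- Let B be a bounded measurable set, (ρ_n) non-negative measurable functions and (m_n) measurable vector fields on B such that sup_n ∫_B |m_n|²/ρ_n dx < ∞ (with the convention |m|²/ρ = ∞ if ρ = 0, m ≠ 0, and 0 if ρ = m = 0), and (ρ_n) uniformly integrable on B. Then (m_n) is uniformly integrable on B. -/

import Mathlib

open MeasureTheory
open scoped ENNReal

open Classical in
/-- Extended kinetic energy `|m|²/ρ`, with the conventions `0` if `ρ = 0, m = 0`
and `∞` if `ρ = 0, m ≠ 0`. -/
noncomputable def kinExt (N d : ℕ) (ρ : ℝ) (m : EuclideanSpace ℝ (Fin d)) : ℝ≥0∞ :=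
  if 0 < ρ then ENNReal.ofReal (‖m‖ ^ 2 / ρ) else if m = 0 then 0 else ⊤

/-- A uniform kinetic energy bound together with uniform integrability of the densities implies
uniform integrability of the momenta. -/
lemma kinExt_key (N d : ℕ) (lam ρ0 : ℝ) (hlam : 0 < lam) (hρ0 : 0 ≤ ρ0)
    (m0 : EuclideanSpace ℝ (Fin d)) :
    ENNReal.ofReal ‖m0‖ ≤ ENNReal.ofReal (lam * ρ0) + (ENNReal.ofReal lam)⁻¹ * kinExt N d ρ0 m0 := by
  unfold kinExt
  by_cases h : 0 < ρ0
  · simp only [h, if_true]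
    have hr : (ENNReal.ofReal lam)⁻¹ * ENNReal.ofReal (‖m0‖ ^ 2 / ρ0)
        = ENNReal.ofReal ((‖m0‖ ^ 2 / ρ0) / lam) := by
      rw [ENNReal.ofReal_div_of_pos hlam, div_eq_mul_inv, mul_comm]; rfl
    rw [hr, ← ENNReal.ofReal_add (by positivity) (by positivity)]
    apply ENNReal.ofReal_le_ofReal
    have h1 : (‖m0‖ ^ 2 / ρ0) / lam = ‖m0‖ ^ 2 / (ρ0 * lam) := by rw [div_div]
    rw [h1]
    have h2 : ‖m0‖ ^ 2 / (ρ0 * lam) * (ρ0 * lam) = ‖m0‖ ^ 2 :=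
      div_mul_cancel₀ _ (by positivity)
    nlinarith [sq_nonneg (lam * ρ0 - ‖m0‖), norm_nonneg m0, mul_pos h hlam,
      mul_nonneg (mul_pos h hlam).le (norm_nonneg m0)]
  · have hρz : ρ0 = 0 := le_antisymm (not_lt.1 h) hρ0
    by_cases hm : m0 = 0
    · simp [h, hm]
    · simp only [h, if_false, hm]
      have : (ENNReal.ofReal lam)⁻¹ * ⊤ = ⊤ := by
        rw [ENNReal.mul_top]
        simp [ENNReal.inv_ne_zero.2 ENNReal.ofReal_ne_top]
      rw [this]
      exact le_top

lemma kinExt_meas (N d : ℕ) (ρ : EuclideanSpace ℝ (Fin N) → ℝ) (hρm : Measurable ρ)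
    (m : EuclideanSpace ℝ (Fin N) → EuclideanSpace ℝ (Fin d)) (hmm : Measurable m) :
    Measurable fun y => kinExt N d (ρ y) (m y) := by
  unfold kinExt
  apply Measurable.ite (measurableSet_lt measurable_const hρm)
  · exact ((hmm.norm.pow_const 2).div hρm).ennreal_ofReal
  · exact Measurable.ite (measurableSet_eq_fun hmm measurable_const) measurable_const
      measurable_const

theorem momentum_unifIntegrable (N d : ℕ)
    (B : Set (EuclideanSpace ℝ (Fin N))) (hBb : Bornology.IsBounded B) (hBm : MeasurableSet B)
    (ρ : ℕ → EuclideanSpace ℝ (Fin N) → ℝ) (hρm : ∀ n, Measurable (ρ n))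
    (hnn : ∀ n y, 0 ≤ ρ n y)
    (m : ℕ → EuclideanSpace ℝ (Fin N) → EuclideanSpace ℝ (Fin d))
    (hmm : ∀ n, Measurable (m n))
    (hkin : ∃ C : ℝ, ∀ n, ∫⁻ y in B, kinExt N d (ρ n y) (m n y) ≤ ENNReal.ofReal C)
    (hρui : ∀ ε > (0 : ℝ), ∃ δ > (0 : ℝ), ∀ n, ∀ s ⊆ B, MeasurableSet s →
      volume s ≤ ENNReal.ofReal δ → ∫ y in s, ρ n y ≤ ε) :
    ∀ ε > (0 : ℝ), ∃ δ > (0 : ℝ), ∀ n, ∀ s ⊆ B, MeasurableSet s →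
      volume s ≤ ENNReal.ofReal δ → ∫ y in s, ‖m n y‖ ≤ ε := by
  obtain ⟨C, hC⟩ := hkin
  intro ε hε
  set K : ℝ := max C 1 with hKdef
  have hKpos : (0:ℝ) < K := lt_of_lt_of_le one_pos (le_max_right _ _)
  set lam : ℝ := 2 * K / ε with hlamdef
  have hlampos : 0 < lam := by positivity
  obtain ⟨δ, hδpos, hδ⟩ := hρui (ε / (2 * lam)) (by positivity)
  refine ⟨δ, hδpos, fun n s hsB hsm hsvol => ?_⟩
  have hkinm : Measurable fun y => kinExt N d (ρ n y) (m n y) :=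
    kinExt_meas N d (ρ n) (hρm n) (m n) (hmm n)
  -- core bound on truncated sets
  have core : ∀ R : ℕ, ∫⁻ y in s ∩ {y | ρ n y ≤ (R:ℝ)}, ENNReal.ofReal ‖m n y‖
      ≤ ENNReal.ofReal ε := by
    intro R
    set t := s ∩ {y | ρ n y ≤ (R:ℝ)} with htdef
    have htm : MeasurableSet t := hsm.inter (measurableSet_le (hρm n) measurable_const)
    have htB : t ⊆ B := Set.inter_subset_left.trans hsB
    have htvol : volume t ≤ ENNReal.ofReal δ :=
      le_trans (measure_mono Set.inter_subset_left) hsvol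
    have htfin : volume t < ⊤ := lt_of_le_of_lt htvol ENNReal.ofReal_lt_top
    have hint : IntegrableOn (ρ n) t := by
      apply Integrable.mono' (show IntegrableOn (fun _ => (R:ℝ)) t volume from integrableOn_const htfin.ne)
        (hρm n).aestronglyMeasurable
      filter_upwards [ae_restrict_mem htm] with y hy
      rw [Real.norm_eq_abs, abs_of_nonneg (hnn n y)]
      exact hy.2
    have hρlin : ∫⁻ y in t, ENNReal.ofReal (ρ n y) ≤ ENNReal.ofReal (ε / (2 * lam)) := by
      rw [← ofReal_integral_eq_lintegral_ofReal hint (ae_of_all _ fun y => hnn n y)]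
      exact ENNReal.ofReal_le_ofReal (hδ n t htB htm htvol)
    calc ∫⁻ y in t, ENNReal.ofReal ‖m n y‖
        ≤ ∫⁻ y in t, (ENNReal.ofReal (lam * ρ n y)
            + (ENNReal.ofReal lam)⁻¹ * kinExt N d (ρ n y) (m n y)) :=
          lintegral_mono fun y => kinExt_key N d lam (ρ n y) hlampos (hnn n y) (m n y)
      _ = (∫⁻ y in t, ENNReal.ofReal (lam * ρ n y))
            + ∫⁻ y in t, (ENNReal.ofReal lam)⁻¹ * kinExt N d (ρ n y) (m n y) :=
          lintegral_add_left (((hρm n).const_mul lam).ennreal_ofReal) _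
      _ = ENNReal.ofReal lam * (∫⁻ y in t, ENNReal.ofReal (ρ n y))
            + (ENNReal.ofReal lam)⁻¹ * ∫⁻ y in t, kinExt N d (ρ n y) (m n y) := by
          rw [lintegral_const_mul _ hkinm]
          congr 1
          rw [← lintegral_const_mul _ (hρm n).ennreal_ofReal]
          refine lintegral_congr fun y => ?_
          rw [← ENNReal.ofReal_mul hlampos.le]
      _ ≤ ENNReal.ofReal lam * ENNReal.ofReal (ε / (2 * lam))
            + (ENNReal.ofReal lam)⁻¹ * ENNReal.ofReal K := by
          gcongr
          exact le_trans (lintegral_mono_set htB) (le_trans (hC n)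
              (ENNReal.ofReal_le_ofReal (le_max_left _ _)))
      _ = ENNReal.ofReal ε := by
          have e1 : ENNReal.ofReal lam * ENNReal.ofReal (ε / (2 * lam))
              = ENNReal.ofReal (ε / 2) := by
            rw [← ENNReal.ofReal_mul hlampos.le]
            congr 1
            field_simp
          have e2 : (ENNReal.ofReal lam)⁻¹ * ENNReal.ofReal K = ENNReal.ofReal (ε / 2) := by
            rw [mul_comm, ← div_eq_mul_inv, ← ENNReal.ofReal_div_of_pos hlampos]
            congr 1
            rw [hlamdef]
            field_simp
          rw [e1, e2, ← ENNReal.ofReal_add (by positivity) (by positivity)]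
          congr 1
          linarith
  -- pass to the limit R → ∞
  set f : EuclideanSpace ℝ (Fin N) → ℝ≥0∞ := fun y => ENNReal.ofReal ‖m n y‖ with hfdef
  have hfm : Measurable f := (hmm n).norm.ennreal_ofReal
  have hgm : ∀ R : ℕ, Measurable ((s ∩ {y | ρ n y ≤ (R:ℝ)}).indicator f) := fun R =>
    hfm.indicator (hsm.inter (measurableSet_le (hρm n) measurable_const))
  have hmono : Monotone fun R : ℕ => (s ∩ {y | ρ n y ≤ (R:ℝ)}).indicator f := by
    intro a b hab
    apply Set.indicator_le_indicator_of_subset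
    · exact Set.inter_subset_inter_right _ fun y hy =>
        Set.mem_setOf.2 (le_trans (Set.mem_setOf.1 hy) (Nat.cast_le.2 hab))
    · exact fun _ => zero_le
  have hsup : ∀ y, (⨆ R : ℕ, (s ∩ {y | ρ n y ≤ (R:ℝ)}).indicator f y) = s.indicator f y := by
    intro y
    apply le_antisymm
    · exact iSup_le fun R => Set.indicator_le_indicator_of_subset
        Set.inter_subset_left (fun _ => zero_le) y
    · by_cases hy : y ∈ s
      · obtain ⟨R, hR⟩ := exists_nat_ge (ρ n y)
        refine le_iSup_of_le R (le_of_eq ?_)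
        rw [Set.indicator_of_mem hy,
          Set.indicator_of_mem (Set.mem_inter hy (show y ∈ {y | ρ n y ≤ (R:ℝ)} from hR))]
      · rw [Set.indicator_of_notMem hy]
        exact zero_le
  have main : ∫⁻ y in s, f y ≤ ENNReal.ofReal ε := by
    rw [← lintegral_indicator hsm]
    have : (s.indicator f) = fun y => ⨆ R : ℕ, (s ∩ {y | ρ n y ≤ (R:ℝ)}).indicator f y := by
      funext y; rw [hsup y]
    rw [this, lintegral_iSup hgm hmono]
    refine iSup_le fun R => ?_
    rw [lintegral_indicator (hsm.inter (measurableSet_le (hρm n) measurable_const))]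
    exact core R
  have hmint : ∫⁻ y in s, f y ≠ ⊤ := ne_top_of_le_ne_top ENNReal.ofReal_ne_top main
  rw [integral_eq_lintegral_of_nonneg_ae (ae_of_all _ fun y => norm_nonneg (m n y))
    (hmm n).norm.aestronglyMeasurable]
  exact ENNReal.toReal_le_of_le_ofReal hε.le main
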